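/- Suppose that G is a graph on n vertices and that U ⊆ V(G) is a set of m vertices. Then the cut distance between G and its induced subgraph G[U] satisfies δ_□(G, G[U]) ≤ 2(1 − m/n). -/

import Mathlib

open MeasureTheory

noncomputable section

/-- A graphon: a symmetric measurable kernel with values in `[0,1]`. -/
def IsGraphon {Ω : Type*} [MeasurableSpace Ω] (W : Ω → Ω → ℝ) : Prop :=
  Measurable (Function.uncurry W) ∧ (∀ x y, W x y = W y x) ∧
    ∀ x y, W x y ∈ Set.Icc (0 : ℝ) 1

open scoped Classical in
/-- Homomorphism density `t(T,W)` of a finite graph `T` in a kernel `W` on `(Ω,π)`. -/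
def homDensity {Ω : Type*} [MeasurableSpace Ω] (π : Measure Ω) (W : Ω → Ω → ℝ)
    {k : ℕ} (T : SimpleGraph (Fin k)) : ℝ :=
  ∫ x : Fin k → Ω,
    ∏ p ∈ Finset.univ.filter (fun p : Fin k × Fin k => p.1 < p.2 ∧ T.Adj p.1 p.2),
      W (x p.1) (x p.2) ∂(Measure.pi fun _ => π)

/-- Two graphons are fractionally isomorphic if all tree homomorphism densities agree. -/
def FracIsoGraphons {Λ Ω : Type*} [MeasurableSpace Λ] [MeasurableSpace Ω]
    (ν : Measure Λ) (U : Λ → Λ → ℝ) (π : Measure Ω) (W : Ω → Ω → ℝ) : Prop :=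
  ∀ (k : ℕ) (T : SimpleGraph (Fin k)), T.IsTree → homDensity ν U T = homDensity π W T

/-- The cut norm `‖W‖_□` of a kernel `W` on `(Ω,π)`. -/
def cutNorm {Ω : Type*} [MeasurableSpace Ω] (π : Measure Ω) (W : Ω → Ω → ℝ) : ℝ :=
  ⨆ p : {q : Set Ω × Set Ω // MeasurableSet q.1 ∧ MeasurableSet q.2},
    |∫ z in p.1.1 ×ˢ p.1.2, W z.1 z.2 ∂(π.prod π)|

/-- The cut distance `δ_□(U,W)` between `U` on `(Λ,ν)` and `W` on `(Ω,π)`: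
the infimum over measure-preserving bijections `φ : Ω → Λ` of `‖U∘(φ×φ) − W‖_□`. -/
def cutDist {Λ Ω : Type*} [MeasurableSpace Λ] [MeasurableSpace Ω]
    (ν : Measure Λ) (U : Λ → Λ → ℝ) (π : Measure Ω) (W : Ω → Ω → ℝ) : ℝ :=
  ⨅ φ : {ψ : Ω ≃ᵐ Λ // MeasurePreserving ψ π ν},
    cutNorm π fun x y => U (φ.1 x) (φ.1 y) - W x y

/-- The uniform probability measure on `[0,1) ⊆ ℝ`. -/
def graphMeasure : Measure ℝ := volume.restrict (Set.Ico (0 : ℝ) 1)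

/-- The step-graphon representation `W_G` of a finite graph `G`, as a kernel on
`(ℝ, graphMeasure)`: the space is split into `|V(G)|` intervals of measure `1/|V(G)|`,
and `W_G = 1` on `Ω_u × Ω_v` iff `uv` is an edge. -/
def graphRep {V : Type*} [Fintype V] (G : SimpleGraph V) : ℝ → ℝ → ℝ := fun x y =>
  Set.indicator
    {p : ℝ × ℝ | ∃ u v : V, G.Adj u v ∧
      p.1 ∈ Set.Ico (((Fintype.equivFin V u : ℕ) : ℝ) / (Fintype.card V))
        ((((Fintype.equivFin V u : ℕ) : ℝ) + 1) / (Fintype.card V)) ∧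
      p.2 ∈ Set.Ico (((Fintype.equivFin V v : ℕ) : ℝ) / (Fintype.card V))
        ((((Fintype.equivFin V v : ℕ) : ℝ) + 1) / (Fintype.card V))}
    (fun _ => 1) (x, y)

/-- Cut distance `δ_□(U,G) := δ_□(U, W_G)` between a graphon and a finite graph. -/
def cutDistToGraph {Λ : Type*} [MeasurableSpace Λ] (ν : Measure Λ) (U : Λ → Λ → ℝ)
    {V : Type*} [Fintype V] (G : SimpleGraph V) : ℝ :=
  cutDist ν U graphMeasure (graphRep G)

open scoped Classical in
/-- `deg_G(u;S)`: the number of neighbours of `u` inside `S`. -/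
def degIn {V : Type*} (G : SimpleGraph V) (u : V) (S : Finset V) : ℕ :=
  (S.filter fun v => G.Adj u v).card

/-- `P` is an equitable partition of `G` with parameters `(p, D)`: the parts are nonempty,
pairwise disjoint, cover the vertex set, `|P i| = p i`, and every vertex of `P i` has
exactly `D i j` neighbours in `P j` (in particular its degree into `P j` equals the
average degree into `P j` over `P i`). -/
def IsEquitablePartition {V : Type*} (G : SimpleGraph V)
    {k : ℕ} (P : Fin k → Finset V) (p : Fin k → ℕ) (D : Fin k → Fin k → ℕ) : Prop :=
  (∀ i, (P i).Nonempty) ∧ (Pairwise fun i j => Disjoint (P i) (P j)) ∧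
    (∀ v : V, ∃ i, v ∈ P i) ∧ (∀ i, (P i).card = p i) ∧
    ∀ i j, ∀ u ∈ P i, degIn G u (P j) = D i j

/-- Two finite graphs are fractionally isomorphic if they admit equitable partitions
with the same parameters. -/
def FracIsoGraphs {V V' : Type*} (G : SimpleGraph V) (H : SimpleGraph V') : Prop :=
  ∃ (k : ℕ) (P : Fin k → Finset V) (Q : Fin k → Finset V')
    (p : Fin k → ℕ) (D : Fin k → Fin k → ℕ),
      IsEquitablePartition G P p D ∧ IsEquitablePartition H Q p D

/-- The generalized degree `deg_W(x;Y) = ∫_Y W(x,y) dπ(y)`. -/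
def wdeg {Ω : Type*} [MeasurableSpace Ω] (π : Measure Ω) (W : Ω → Ω → ℝ)
    (x : Ω) (Y : Set Ω) : ℝ :=
  ∫ y in Y, W x y ∂π

/-- The density `d(C,D)` of a pair of sets in `W`. -/
def pairDensity {Ω : Type*} [MeasurableSpace Ω] (π : Measure Ω) (W : Ω → Ω → ℝ)
    (C D : Set Ω) : ℝ :=
  (∫ z in C ×ˢ D, W z.1 z.2 ∂(π.prod π)) / ((π C).toReal * (π D).toReal)

/-- `(C,D)` is a `δ`-regular pair in `W`. -/
def IsRegularPair {Ω : Type*} [MeasurableSpace Ω] (π : Measure Ω) (W : Ω → Ω → ℝ)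
    (δ : ℝ) (C D : Set Ω) : Prop :=
  ∀ C' D' : Set Ω, MeasurableSet C' → MeasurableSet D' → C' ⊆ C → D' ⊆ D →
    |(π C').toReal * (π D').toReal * pairDensity π W C D
        - ∫ z in C' ×ˢ D', W z.1 z.2 ∂(π.prod π)|
      ≤ δ * (π C).toReal * (π D).toReal

/-- `C` is elegant in `W`: almost every `x ∈ C` satisfies `deg_W(x;C) = π(C)·d(C)`. -/
def IsElegant {Ω : Type*} [MeasurableSpace Ω] (π : Measure Ω) (W : Ω → Ω → ℝ)
    (C : Set Ω) : Prop :=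
  ∀ᵐ x ∂(π.restrict C), wdeg π W x C = (π C).toReal * pairDensity π W C C

/-- A `β`-robust density matrix: symmetric, with entries either `0` or in `[β, 1−β]`. -/
def RobustDensityMatrix {M : ℕ} (β : ℝ) (𝒟 : Fin M → Fin M → ℝ) : Prop :=
  (∀ i j, 𝒟 i j = 𝒟 j i) ∧ ∀ i j, 𝒟 i j = 0 ∨ 𝒟 i j ∈ Set.Icc β (1 - β)

/-- A unit vector: entries in `[0,1]` summing to `1`. -/
def IsUnitVector {M : ℕ} (v : Fin M → ℝ) : Prop :=
  (∀ i, v i ∈ Set.Icc (0 : ℝ) 1) ∧ ∑ i, v i = 1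

/-- The `(β,λ,δ,α)`-Setup. -/
def Setup4 (β lam δ α : ℝ) : Prop :=
  0 < β ∧ 0 < lam ∧ 0 < δ ∧ 0 < α ∧
    β ≤ 1 / 1000 ∧ lam ≤ β ^ 3 / 1000 ∧ δ ≤ β ^ 2 * lam ^ 2 ∧
    β - α ∈ Set.Icc (20 * lam) (β ^ 3 / 5)

/-- The `(β,λ,δ,α,M,m)`-Setup. -/
def Setup6 (β lam δ α : ℝ) (M m : ℕ) : Prop :=
  Setup4 β lam δ α ∧
    (10 : ℝ) ^ 4 * (M : ℝ) ^ 2 * (2 : ℝ) ^ ((10 : ℝ) ^ 3 / β ^ 2)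
      / (β ^ 2 * lam ^ 3 * δ ^ 4) ≤ (m : ℝ)

end

noncomputable section

namespace IET
variable (N : ℕ) (t : ℕ → ℕ)

/-- interval exchange map -/
def iet : ℝ → ℝ := fun x =>
  if x ∈ Set.Ico (0:ℝ) 1 then x + ((t ⌊x * N⌋₊ : ℝ) - (⌊x * N⌋₊ : ℝ)) / N else x

lemma measurable_iet : Measurable (iet N t) := by
  unfold iet
  refine Measurable.ite measurableSet_Ico ?_ measurable_id
  exact measurable_id.add <| Measurable.comp (measurable_from_nat (f := fun k : ℕ => ((t k : ℝ) - k)/N)) (Nat.measurable_floor.comp (measurable_id.mul_const _))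

variable {N t}

lemma floor_lt_of_mem (hN : 0 < N) {x : ℝ} (hx : x ∈ Set.Ico (0:ℝ) 1) : ⌊x * N⌋₊ < N := by
  have hN' : (0:ℝ) < N := Nat.cast_pos.mpr hN
  have : x * N < N := by nlinarith [hx.1, hx.2]
  exact Nat.floor_lt (mul_nonneg hx.1 hN'.le) |>.mpr (by exact_mod_cast this)

lemma mem_block (hN : 0 < N) {x : ℝ} (hx : x ∈ Set.Ico (0:ℝ) 1) :
    x ∈ Set.Ico ((⌊x * N⌋₊ : ℝ)/N) ((⌊x * N⌋₊ + 1 : ℝ)/N) := by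
  have hN' : (0:ℝ) < N := Nat.cast_pos.mpr hN
  have h0 : (0:ℝ) ≤ x * N := mul_nonneg hx.1 hN'.le
  constructor
  · rw [div_le_iff₀ hN']
    exact Nat.floor_le h0
  · rw [lt_div_iff₀ hN']
    exact Nat.lt_floor_add_one _

lemma floor_eq_of_mem_block (hN : 0 < N) {x : ℝ} {b : ℕ}
    (hx : x ∈ Set.Ico ((b : ℝ)/N) ((b + 1 : ℝ)/N)) : ⌊x * N⌋₊ = b := by
  have hN' : (0:ℝ) < N := Nat.cast_pos.mpr hN
  have h1 : (b:ℝ) ≤ x * N := (div_le_iff₀ hN').mp hx.1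
  have h2 : x * N < b + 1 := (lt_div_iff₀ hN').mp hx.2
  rw [Nat.floor_eq_iff (le_trans (by positivity) h1)]
  exact ⟨by exact_mod_cast h1, by exact_mod_cast h2⟩

lemma block_subset (hN : 0 < N) {b : ℕ} (hb : b < N) :
    Set.Ico ((b : ℝ)/N) ((b + 1 : ℝ)/N) ⊆ Set.Ico (0:ℝ) 1 := by
  have hN' : (0:ℝ) < N := Nat.cast_pos.mpr hN
  intro x hx
  constructor
  · exact le_trans (by positivity) hx.1
  · refine lt_of_lt_of_le hx.2 ?_
    rw [div_le_one hN']
    exact_mod_cast hb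

lemma iet_mem_block (hN : 0 < N) {x : ℝ} {b : ℕ}
    (hb : b < N) (hx : x ∈ Set.Ico ((b : ℝ)/N) ((b + 1 : ℝ)/N)) :
    iet N t x ∈ Set.Ico ((t b : ℝ)/N) ((t b + 1 : ℝ)/N) ∧
      iet N t x = x + ((t b : ℝ) - b)/N := by
  have hx1 : x ∈ Set.Ico (0:ℝ) 1 := block_subset hN hb hx
  have hfl : ⌊x * N⌋₊ = b := floor_eq_of_mem_block hN hx
  have hval : iet N t x = x + ((t b : ℝ) - b)/N := by
    rw [iet, if_pos hx1, hfl]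
  refine ⟨?_, hval⟩
  rw [hval]
  have hN' : (0:ℝ) < N := Nat.cast_pos.mpr hN
  have key : (x + ((t b : ℝ) - b)/N) * N = x * N + ((t b : ℝ) - b) := by
    rw [add_mul, div_mul_cancel₀ _ hN'.ne']
  constructor
  · have h1 : (b:ℝ) ≤ x * N := (div_le_iff₀ hN').mp hx.1
    rw [div_le_iff₀ hN', key]
    linarith
  · have h2 : x * N < b + 1 := (lt_div_iff₀ hN').mp hx.2
    rw [lt_div_iff₀ hN', key]
    linarith

end IET

namespace IET
variable {N : ℕ} {t t' : ℕ → ℕ}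

lemma iet_left_inv (hN : 0 < N) (htN : ∀ b < N, t b < N)
    (hinv : ∀ b < N, t' (t b) = b) (x : ℝ) : iet N t' (iet N t x) = x := by
  by_cases hx : x ∈ Set.Ico (0:ℝ) 1
  · have hb : ⌊x * N⌋₊ < N := floor_lt_of_mem hN hx
    set b := ⌊x * N⌋₊ with hbdef
    have hxb : x ∈ Set.Ico ((b : ℝ)/N) ((b + 1 : ℝ)/N) := mem_block hN hx
    obtain ⟨h1, h2⟩ := iet_mem_block hN (t := t) hb hxb
    obtain ⟨h3, h4⟩ := iet_mem_block hN (t := t') (htN b hb) h1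
    rw [h4, h2, hinv b hb]
    ring
  · have h : iet N t x = x := by rw [iet, if_neg hx]
    rw [h, iet, if_neg hx]

end IET

namespace IET
variable {N : ℕ} {t t' : ℕ → ℕ}

/-- blocks at scale `1/c` -/
abbrev Blk (c : ℝ) (b : ℕ) : Set ℝ := Set.Ico ((b:ℝ)/c) ((b+1:ℝ)/c)

lemma blk_disjoint {c : ℝ} (hc : 0 < c) {b b' : ℕ} (h : b ≠ b') :
    Disjoint (Blk c b) (Blk c b') := by
  rw [Blk, Blk, Set.Ico_disjoint_Ico]
  rcases Nat.lt_or_ge b b' with h1 | h1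
  · refine le_trans (min_le_left _ _) (le_trans ?_ (le_max_right _ _))
    gcongr
    exact_mod_cast h1
  · have h1 : b' < b := lt_of_le_of_ne h1 (Ne.symm h)
    refine le_trans (min_le_right _ _) (le_trans ?_ (le_max_left _ _))
    gcongr
    exact_mod_cast h1

lemma partition (hN : 0 < N) :
    Set.Ico (0:ℝ) 1 = ⋃ b ∈ Finset.range N, Blk N b := by
  apply Set.Subset.antisymm
  · intro x hx
    refine Set.mem_biUnion (Finset.mem_range.mpr (floor_lt_of_mem hN hx)) ?_
    exact mem_block hN hx
  · intro x hx
    obtain ⟨b, hb, hxb⟩ := Set.mem_iUnion₂.mp hx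
    exact block_subset hN (Finset.mem_range.mp hb) hxb

lemma inter_Ico_eq_sum (hN : 0 < N) {A : Set ℝ} (hA : MeasurableSet A) :
    volume (A ∩ Set.Ico (0:ℝ) 1) = ∑ b ∈ Finset.range N, volume (A ∩ Blk N b) := by
  rw [partition hN, Set.inter_iUnion₂]
  refine measure_biUnion_finset ?_ ?_
  · intro b _ b' _ hbb'
    exact Disjoint.mono Set.inter_subset_right Set.inter_subset_right
      (blk_disjoint (Nat.cast_pos.mpr hN) hbb')
  · exact fun b _ => hA.inter measurableSet_Ico

lemma iet_measurePreserving (hN : 0 < N) (htN : ∀ b < N, t b < N)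
    (ht'N : ∀ b < N, t' b < N) (hinv1 : ∀ b < N, t' (t b) = b)
    (hinv2 : ∀ b < N, t (t' b) = b) :
    MeasurePreserving (iet N t) graphMeasure graphMeasure := by
  have hN' : (0:ℝ) < N := Nat.cast_pos.mpr hN
  refine ⟨measurable_iet N t, Measure.ext fun B hB => ?_⟩
  rw [Measure.map_apply (measurable_iet N t) hB]
  unfold graphMeasure
  rw [Measure.restrict_apply ((measurable_iet N t) hB), Measure.restrict_apply hB]
  rw [inter_Ico_eq_sum hN ((measurable_iet N t) hB),
    inter_Ico_eq_sum hN hB]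
  have step : ∀ b < N, volume (iet N t ⁻¹' B ∩ Blk N b) = volume (B ∩ Blk N (t b)) := by
    intro b hb
    have hset : iet N t ⁻¹' B ∩ Blk N b = (fun x => x + ((t b : ℝ) - b)/N) ⁻¹' (B ∩ Blk N (t b)) := by
      have e1 : (t b:ℝ)/N - ((t b:ℝ) - b)/N = (b:ℝ)/N := by ring
      have e2 : ((t b:ℝ)+1)/N - ((t b:ℝ) - b)/N = ((b:ℝ)+1)/N := by ring
      have hblk : (fun x => x + ((t b : ℝ) - b)/N) ⁻¹' (Blk N (t b)) = Blk N b := by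
        rw [Blk, Set.preimage_add_const_Ico, e1, e2]
      ext x
      simp only [Set.mem_inter_iff, Set.mem_preimage]
      constructor
      · rintro ⟨hxB, hxb⟩
        obtain ⟨h1, h2⟩ := iet_mem_block hN (t := t) hb hxb
        exact ⟨by rwa [h2] at hxB, by rwa [h2] at h1⟩
      · rintro ⟨hxB, hxb⟩
        have hxb' : x ∈ Blk N b := by rw [← hblk]; exact hxb
        obtain ⟨h1, h2⟩ := iet_mem_block hN (t := t) hb hxb'
        exact ⟨by rw [h2]; exact hxB, hxb'⟩
    rw [hset, measure_preimage_add_right]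
  calc ∑ b ∈ Finset.range N, volume (iet N t ⁻¹' B ∩ Blk N b)
      = ∑ b ∈ Finset.range N, volume (B ∩ Blk N (t b)) :=
        Finset.sum_congr rfl fun b hb => step b (Finset.mem_range.mp hb)
    _ = ∑ b ∈ Finset.range N, volume (B ∩ Blk N b) := by
        refine Finset.sum_nbij' (fun b => t b) (fun b => t' b) ?_ ?_ ?_ ?_ ?_
        · exact fun b hb => Finset.mem_range.mpr (htN b (Finset.mem_range.mp hb))
        · exact fun b hb => Finset.mem_range.mpr (ht'N b (Finset.mem_range.mp hb))
        · exact fun b hb => hinv1 b (Finset.mem_range.mp hb)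
        · exact fun b hb => hinv2 b (Finset.mem_range.mp hb)
        · exact fun b hb => rfl

/-- The interval-exchange measurable equivalence. -/
def ietEquiv (N : ℕ) (t t' : ℕ → ℕ) (hN : 0 < N) (htN : ∀ b < N, t b < N)
    (ht'N : ∀ b < N, t' b < N) (hinv1 : ∀ b < N, t' (t b) = b)
    (hinv2 : ∀ b < N, t (t' b) = b) : ℝ ≃ᵐ ℝ where
  toFun := iet N t
  invFun := iet N t'
  left_inv := iet_left_inv hN htN hinv1
  right_inv := iet_left_inv hN ht'N hinv2
  measurable_toFun := measurable_iet N t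
  measurable_invFun := measurable_iet N t'

end IET

namespace IET

lemma nat_rep_unique {n k r k' r' : ℕ} (hr : r < n) (hr' : r' < n)
    (h : k * n + r = k' * n + r') : k = k' ∧ r = r' := by
  have hn : 0 < n := Nat.pos_of_ne_zero (by rintro rfl; omega)
  have e1 : (k * n + r) / n = k := by
    rw [Nat.add_comm, Nat.add_mul_div_right _ _ hn, Nat.div_eq_of_lt hr]; omega
  have e2 : (k' * n + r') / n = k' := by
    rw [Nat.add_comm, Nat.add_mul_div_right _ _ hn, Nat.div_eq_of_lt hr']; omega
  have hkk : k = k' := by rw [← e1, ← e2, h]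
  refine ⟨hkk, ?_⟩
  subst hkk
  omega

lemma exists_perm {m n : ℕ} (hm : 0 < m) (hmn : m ≤ n) (g : Fin m → Fin n)
    (hg : Function.Injective g) :
    ∃ t t' : ℕ → ℕ, (∀ b < m * n, t b < m * n) ∧ (∀ b < m * n, t' b < m * n) ∧
      (∀ b < m * n, t' (t b) = b) ∧ (∀ b < m * n, t (t' b) = b) ∧
      ∀ k r (hk : k < m) (_ : r < m), t (k * n + r) = (g ⟨k, hk⟩ : ℕ) * m + r := by
  classical
  have hn : 0 < n := lt_of_lt_of_le hm hmn
  have hSb : ∀ p : Fin m × Fin m, (p.1 : ℕ) * n + p.2 < m * n := by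
    intro p
    calc (p.1 : ℕ) * n + p.2 < (p.1 : ℕ) * n + n := by
          have := p.2.isLt; omega
      _ = ((p.1 : ℕ) + 1) * n := by ring
      _ ≤ m * n := Nat.mul_le_mul_right n p.1.isLt
  have hFb : ∀ p : Fin m × Fin m, (g p.1 : ℕ) * m + p.2 < m * n := by
    intro p
    calc (g p.1 : ℕ) * m + p.2 < (g p.1 : ℕ) * m + m := by
          have := p.2.isLt; omega
      _ = ((g p.1 : ℕ) + 1) * m := by ring
      _ ≤ n * m := Nat.mul_le_mul_right m (g p.1).isLt
      _ = m * n := Nat.mul_comm n m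
  set S : Fin m × Fin m → Fin (m * n) := fun p => ⟨(p.1 : ℕ) * n + p.2, hSb p⟩ with hSdef
  set F : Fin m × Fin m → Fin (m * n) := fun p => ⟨(g p.1 : ℕ) * m + p.2, hFb p⟩ with hFdef
  have hS : Function.Injective S := by
    intro p q h
    have h' : (p.1 : ℕ) * n + p.2 = (q.1 : ℕ) * n + q.2 := congrArg Fin.val h
    obtain ⟨h1, h2⟩ := nat_rep_unique (lt_of_lt_of_le p.2.isLt hmn)
      (lt_of_lt_of_le q.2.isLt hmn) h'
    exact Prod.ext (Fin.ext h1) (Fin.ext h2)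
  have hF : Function.Injective F := by
    intro p q h
    have h' : (g p.1 : ℕ) * m + p.2 = (g q.1 : ℕ) * m + q.2 := congrArg Fin.val h
    obtain ⟨h1, h2⟩ := nat_rep_unique p.2.isLt q.2.isLt h'
    exact Prod.ext (hg (Fin.ext h1)) (Fin.ext h2)
  set e : {x : Fin (m * n) // x ∈ Set.range S} ≃ {x : Fin (m * n) // x ∈ Set.range F} :=
    (Equiv.ofInjective S hS).symm.trans (Equiv.ofInjective F hF) with hedef
  set τ : Equiv.Perm (Fin (m * n)) := e.extendSubtype with hτdef
  have hτS : ∀ p : Fin m × Fin m, τ (S p) = F p := by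
    intro p
    rw [hτdef, Equiv.extendSubtype_apply_of_mem e (S p) ⟨p, rfl⟩]
    rw [hedef]
    simp [Equiv.ofInjective_symm_apply, Equiv.ofInjective_apply]
  refine ⟨fun b => if h : b < m * n then (τ ⟨b, h⟩ : ℕ) else b,
    fun b => if h : b < m * n then (τ.symm ⟨b, h⟩ : ℕ) else b, ?_, ?_, ?_, ?_, ?_⟩
  · intro b hb; simp only [dif_pos hb]; exact (τ ⟨b, hb⟩).isLt
  · intro b hb; simp only [dif_pos hb]; exact (τ.symm ⟨b, hb⟩).isLt
  · intro b hb
    simp only [dif_pos hb, dif_pos (τ ⟨b, hb⟩).isLt]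
    simp
  · intro b hb
    simp only [dif_pos hb, dif_pos (τ.symm ⟨b, hb⟩).isLt]
    simp
  · intro k r hk hr
    have hb : k * n + r < m * n := hSb (⟨k, hk⟩, ⟨r, hr⟩)
    simp only [dif_pos hb]
    have : (⟨k * n + r, hb⟩ : Fin (m * n)) = S (⟨k, hk⟩, ⟨r, hr⟩) := rfl
    rw [this, hτS]

end IET


noncomputable section
namespace IET

instance : IsProbabilityMeasure graphMeasure := by
  constructor
  rw [graphMeasure, Measure.restrict_apply_univ, Real.volume_Ico]
  norm_num

/-- the set underlying graphRep -/
def graphSet {V : Type*} [Fintype V] (G : SimpleGraph V) : Set (ℝ × ℝ) :=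
  {p : ℝ × ℝ | ∃ u v : V, G.Adj u v ∧
      p.1 ∈ Set.Ico (((Fintype.equivFin V u : ℕ) : ℝ) / (Fintype.card V))
        ((((Fintype.equivFin V u : ℕ) : ℝ) + 1) / (Fintype.card V)) ∧
      p.2 ∈ Set.Ico (((Fintype.equivFin V v : ℕ) : ℝ) / (Fintype.card V))
        ((((Fintype.equivFin V v : ℕ) : ℝ) + 1) / (Fintype.card V))}

lemma graphRep_eq_indicator {V : Type*} [Fintype V] (G : SimpleGraph V) (x y : ℝ) :
    graphRep G x y = Set.indicator (graphSet G) (fun _ => 1) (x, y) := rfl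

lemma measurableSet_graphSet {V : Type*} [Fintype V] (G : SimpleGraph V) :
    MeasurableSet (graphSet G) := by
  classical
  have huv : ∀ u v : V, MeasurableSet {p : ℝ × ℝ | G.Adj u v ∧
      p.1 ∈ Set.Ico (((Fintype.equivFin V u : ℕ) : ℝ) / (Fintype.card V))
        ((((Fintype.equivFin V u : ℕ) : ℝ) + 1) / (Fintype.card V)) ∧
      p.2 ∈ Set.Ico (((Fintype.equivFin V v : ℕ) : ℝ) / (Fintype.card V))
        ((((Fintype.equivFin V v : ℕ) : ℝ) + 1) / (Fintype.card V))} := by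
    intro u v
    by_cases h : G.Adj u v
    · have : {p : ℝ × ℝ | G.Adj u v ∧
          p.1 ∈ Set.Ico (((Fintype.equivFin V u : ℕ) : ℝ) / (Fintype.card V))
            ((((Fintype.equivFin V u : ℕ) : ℝ) + 1) / (Fintype.card V)) ∧
          p.2 ∈ Set.Ico (((Fintype.equivFin V v : ℕ) : ℝ) / (Fintype.card V))
            ((((Fintype.equivFin V v : ℕ) : ℝ) + 1) / (Fintype.card V))} =
          (Set.Ico (((Fintype.equivFin V u : ℕ) : ℝ) / (Fintype.card V))
            ((((Fintype.equivFin V u : ℕ) : ℝ) + 1) / (Fintype.card V))) ×ˢ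
          (Set.Ico (((Fintype.equivFin V v : ℕ) : ℝ) / (Fintype.card V))
            ((((Fintype.equivFin V v : ℕ) : ℝ) + 1) / (Fintype.card V))) := by
        ext p; simp [h, Set.mem_prod]
      rw [this]
      exact measurableSet_Ico.prod measurableSet_Ico
    · have : {p : ℝ × ℝ | G.Adj u v ∧
          p.1 ∈ Set.Ico (((Fintype.equivFin V u : ℕ) : ℝ) / (Fintype.card V))
            ((((Fintype.equivFin V u : ℕ) : ℝ) + 1) / (Fintype.card V)) ∧
          p.2 ∈ Set.Ico (((Fintype.equivFin V v : ℕ) : ℝ) / (Fintype.card V))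
            ((((Fintype.equivFin V v : ℕ) : ℝ) + 1) / (Fintype.card V))} = ∅ := by
        ext p; simp [h]
      rw [this]
      exact MeasurableSet.empty
  have : graphSet G = ⋃ u : V, ⋃ v : V, {p : ℝ × ℝ | G.Adj u v ∧
      p.1 ∈ Set.Ico (((Fintype.equivFin V u : ℕ) : ℝ) / (Fintype.card V))
        ((((Fintype.equivFin V u : ℕ) : ℝ) + 1) / (Fintype.card V)) ∧
      p.2 ∈ Set.Ico (((Fintype.equivFin V v : ℕ) : ℝ) / (Fintype.card V))
        ((((Fintype.equivFin V v : ℕ) : ℝ) + 1) / (Fintype.card V))} := by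
    ext p
    simp only [graphSet, Set.mem_setOf_eq, Set.mem_iUnion]
  rw [this]
  exact MeasurableSet.iUnion fun u => MeasurableSet.iUnion fun v => huv u v

lemma measurable_graphRep {V : Type*} [Fintype V] (G : SimpleGraph V) :
    Measurable (fun p : ℝ × ℝ => graphRep G p.1 p.2) := by
  have : (fun p : ℝ × ℝ => graphRep G p.1 p.2) =
      Set.indicator (graphSet G) (fun _ => 1) := by
    ext p; rw [graphRep_eq_indicator]
  rw [this]
  exact measurable_const.indicator (measurableSet_graphSet G)

lemma graphRep_mem_Icc {V : Type*} [Fintype V] (G : SimpleGraph V) (x y : ℝ) :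
    graphRep G x y ∈ Set.Icc (0:ℝ) 1 := by
  classical
  rw [graphRep_eq_indicator, Set.indicator_apply]
  split <;> norm_num

lemma blk_eq_of_mem {c : ℝ} (hc : 0 < c) {b b' : ℕ} {x : ℝ}
    (h : x ∈ Blk c b) (h' : x ∈ Blk c b') : b = b' := by
  by_contra hbb
  exact Set.disjoint_left.mp (blk_disjoint hc hbb) h h'

open Classical in
lemma graphRep_eq_ite {V : Type*} [Fintype V] (G : SimpleGraph V) (u v : V) {x y : ℝ}
    (hx : x ∈ Blk (Fintype.card V) (Fintype.equivFin V u))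
    (hy : y ∈ Blk (Fintype.card V) (Fintype.equivFin V v)) :
    graphRep G x y = if G.Adj u v then 1 else 0 := by
  classical
  have hc : (0:ℝ) < Fintype.card V :=
    Nat.cast_pos.mpr (Fintype.card_pos_iff.mpr ⟨u⟩)
  rw [graphRep_eq_indicator]
  by_cases h : G.Adj u v
  · rw [if_pos h]
    have hmem : (x, y) ∈ graphSet G := by
      rw [graphSet, Set.mem_setOf_eq]
      exact ⟨u, v, h, hx, hy⟩
    exact Set.indicator_of_mem hmem _
  · rw [if_neg h]
    refine Set.indicator_of_notMem ?_ _
    rw [graphSet, Set.mem_setOf_eq]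
    rintro ⟨u', v', h', hx', hy'⟩
    have h1 : (Fintype.equivFin V u : ℕ) = (Fintype.equivFin V u' : ℕ) :=
      blk_eq_of_mem hc hx hx'
    have h2 : (Fintype.equivFin V v : ℕ) = (Fintype.equivFin V v' : ℕ) :=
      blk_eq_of_mem hc hy hy'
    have hu : u = u' := (Fintype.equivFin V).injective (Fin.ext h1)
    have hv : v = v' := (Fintype.equivFin V).injective (Fin.ext h2)
    exact h (hu ▸ hv ▸ h')

end IET
end

noncomputable section
namespace IET

lemma cutNorm_nonneg {Ω : Type*} [MeasurableSpace Ω] (π : Measure Ω) (W : Ω → Ω → ℝ) :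
    0 ≤ cutNorm π W :=
  Real.iSup_nonneg fun _ => abs_nonneg _

lemma cutNorm_le_of_good {V W' : Type*} [Fintype V] [Fintype W'] (G : SimpleGraph V)
    (H : SimpleGraph W') (φ : ℝ ≃ᵐ ℝ) (Good : Set ℝ) (hGood : MeasurableSet Good)
    (hker : ∀ x ∈ Good, ∀ y ∈ Good, graphRep G (φ x) (φ y) = graphRep H x y) :
    cutNorm graphMeasure (fun x y => graphRep G (φ x) (φ y) - graphRep H x y)
      ≤ 2 * (graphMeasure Goodᶜ).toReal := by
  set π := graphMeasure
  set D : ℝ × ℝ → ℝ := fun z => graphRep G (φ z.1) (φ z.2) - graphRep H z.1 z.2 with hD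
  have hDmeas : Measurable D := by
    apply Measurable.sub
    · exact (measurable_graphRep G).comp
        ((φ.measurable.comp measurable_fst).prodMk (φ.measurable.comp measurable_snd))
    · exact measurable_graphRep H
  have hDabs : ∀ z, |D z| ≤ 1 := by
    intro z
    have h1 := graphRep_mem_Icc G (φ z.1) (φ z.2)
    have h2 := graphRep_mem_Icc H z.1 z.2
    have hDz : D z = graphRep G (φ z.1) (φ z.2) - graphRep H z.1 z.2 := rfl
    rw [abs_le, hDz]
    constructor <;> [linarith [h1.1, h2.2]; linarith [h1.2, h2.1]]
  set Bad : Set (ℝ × ℝ) := (Goodᶜ ×ˢ (Set.univ : Set ℝ)) ∪ ((Set.univ : Set ℝ) ×ˢ Goodᶜ)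
    with hBad
  have hBadMeas : MeasurableSet Bad :=
    (hGood.compl.prod MeasurableSet.univ).union (MeasurableSet.univ.prod hGood.compl)
  have hDint : Integrable D (π.prod π) := by
    refine Integrable.mono' (integrable_const 1) hDmeas.aestronglyMeasurable ?_
    exact Filter.Eventually.of_forall fun z => by
      rw [Real.norm_eq_abs]; exact hDabs z
  have hgint : Integrable (Bad.indicator fun _ => (1:ℝ)) (π.prod π) :=
    (integrable_const 1).indicator hBadMeas
  have hmono : ∀ z, |D z| ≤ Bad.indicator (fun _ => (1:ℝ)) z := by
    intro z
    by_cases hz : z.1 ∈ Good ∧ z.2 ∈ Good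
    · rw [hD]
      simp only [hker z.1 hz.1 z.2 hz.2, sub_self, abs_zero]
      exact Set.indicator_nonneg (fun _ _ => zero_le_one) z
    · have hzBad : z ∈ Bad := by
        rw [hBad]
        rcases not_and_or.mp hz with h | h
        · exact Or.inl ⟨h, Set.mem_univ _⟩
        · exact Or.inr ⟨Set.mem_univ _, h⟩
      rw [Set.indicator_of_mem hzBad]
      exact hDabs z
  have key : ∀ S T : Set ℝ, MeasurableSet S → MeasurableSet T →
      |∫ z in S ×ˢ T, D z ∂(π.prod π)| ≤ 2 * (π Goodᶜ).toReal := by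
    intro S T hS hT
    have h1 : |∫ z in S ×ˢ T, D z ∂(π.prod π)| ≤ ∫ z in S ×ˢ T, |D z| ∂(π.prod π) := by
      simpa [Real.norm_eq_abs] using
        norm_integral_le_integral_norm (μ := (π.prod π).restrict (S ×ˢ T)) D
    have h2 : ∫ z in S ×ˢ T, |D z| ∂(π.prod π) ≤ ∫ z, |D z| ∂(π.prod π) :=
      setIntegral_le_integral hDint.abs (Filter.Eventually.of_forall fun z => abs_nonneg _)
    have h3 : ∫ z, |D z| ∂(π.prod π) ≤ ∫ z, Bad.indicator (fun _ => (1:ℝ)) z ∂(π.prod π) :=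
      integral_mono hDint.abs hgint hmono
    have h4 : ∫ z, Bad.indicator (fun _ => (1:ℝ)) z ∂(π.prod π)
        = ((π.prod π) Bad).toReal := by
      rw [integral_indicator_const (1:ℝ) hBadMeas]
      simp
      rfl
    have h5 : (π.prod π) Bad ≤ π Goodᶜ + π Goodᶜ := by
      refine le_trans (measure_union_le _ _) ?_
      rw [Measure.prod_prod, Measure.prod_prod, measure_univ, mul_one, one_mul]
    have h6 : ((π.prod π) Bad).toReal ≤ 2 * (π Goodᶜ).toReal := by
      have hne : π Goodᶜ ≠ ⊤ := measure_ne_top _ _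
      calc ((π.prod π) Bad).toReal ≤ (π Goodᶜ + π Goodᶜ).toReal :=
            ENNReal.toReal_mono (by finiteness) h5
        _ = 2 * (π Goodᶜ).toReal := by rw [ENNReal.toReal_add hne hne]; ring
      
    linarith
  refine Real.iSup_le (fun p => ?_) (by positivity)
  exact key p.1.1 p.1.2 p.2.1 p.2.2

end IET
end

noncomputable section
namespace IET

lemma cutDist_le_cutNorm {Λ Ω : Type*} [MeasurableSpace Λ] [MeasurableSpace Ω]
    (ν : Measure Λ) (U : Λ → Λ → ℝ) (π : Measure Ω) (W : Ω → Ω → ℝ)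
    (φ : Ω ≃ᵐ Λ) (hφ : MeasurePreserving φ π ν) :
    cutDist ν U π W ≤ cutNorm π fun x y => U (φ x) (φ y) - W x y := by
  have hbdd : BddBelow (Set.range fun ψ : {ψ : Ω ≃ᵐ Λ // MeasurePreserving ψ π ν} =>
      cutNorm π fun x y => U (ψ.1 x) (ψ.1 y) - W x y) := by
    refine ⟨0, ?_⟩
    rintro x ⟨ψ, rfl⟩
    exact cutNorm_nonneg _ _
  exact ciInf_le hbdd ⟨φ, hφ⟩

lemma I_subset_blk {m n : ℕ} (hm : 0 < m) (hmn : m ≤ n) (k : ℕ) :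
    Set.Ico ((k:ℝ)/m) ((k:ℝ)/m + 1/n) ⊆ Blk m k := by
  have hm' : (0:ℝ) < m := Nat.cast_pos.mpr hm
  have hn' : (0:ℝ) < n := Nat.cast_pos.mpr (lt_of_lt_of_le hm hmn)
  intro x hx
  refine ⟨hx.1, lt_of_lt_of_le hx.2 ?_⟩
  have h1 : (1:ℝ)/n ≤ 1/m := one_div_le_one_div_of_le hm' (Nat.cast_le.mpr hmn)
  have h2 : (k:ℝ)/m + 1/m = ((k:ℝ)+1)/m := by ring
  linarith

lemma blk_mul_subset {m n j r : ℕ} (hm : 0 < m) (hn : 0 < n) (hr : r < m) :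
    Blk ((m * n : ℕ) : ℝ) (j * m + r) ⊆ Blk n j := by
  have hm' : (0:ℝ) < m := Nat.cast_pos.mpr hm
  have hn' : (0:ℝ) < n := Nat.cast_pos.mpr hn
  have hr' : (r:ℝ) + 1 ≤ m := by exact_mod_cast hr
  have hNcast : ((m * n : ℕ) : ℝ) = (m:ℝ) * n := by push_cast; ring
  intro x hx
  obtain ⟨hx1, hx2⟩ := hx
  rw [hNcast] at hx1 hx2
  constructor
  · refine le_trans ?_ hx1
    rw [div_le_div_iff₀ hn' (by positivity)]
    push_cast
    nlinarith [mul_nonneg (Nat.cast_nonneg (α := ℝ) r) hn'.le]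
  · refine lt_of_lt_of_le hx2 ?_
    rw [div_le_div_iff₀ (by positivity) hn']
    push_cast
    nlinarith [mul_le_mul_of_nonneg_right hr' hn'.le]

lemma iet_maps_I {m n : ℕ} (hm : 0 < m) (hmn : m ≤ n) {t : ℕ → ℕ} {j k : ℕ}
    (hk : k < m) (hj : j < n) (hkey : ∀ r < m, t (k * n + r) = j * m + r)
    {x : ℝ} (hx : x ∈ Set.Ico ((k:ℝ)/m) ((k:ℝ)/m + 1/n)) :
    iet (m * n) t x ∈ Blk n j := by
  have hn : 0 < n := lt_of_lt_of_le hm hmn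
  have hN : 0 < m * n := Nat.mul_pos hm hn
  have hm' : (0:ℝ) < m := Nat.cast_pos.mpr hm
  have hn' : (0:ℝ) < n := Nat.cast_pos.mpr hn
  have hmn' : (m:ℝ) ≤ n := Nat.cast_le.mpr hmn
  have hk' : (k:ℝ) + 1 ≤ m := by exact_mod_cast hk
  have hNcast : ((m * n : ℕ) : ℝ) = (m:ℝ) * n := by push_cast; ring
  have hx01 : x ∈ Set.Ico (0:ℝ) 1 := by
    constructor
    · exact le_trans (by positivity) hx.1
    · refine lt_of_lt_of_le hx.2 ?_
      rw [div_add_div _ _ hm'.ne' hn'.ne', div_le_one (by positivity)]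
      nlinarith
  set b := ⌊x * ((m * n : ℕ) : ℝ)⌋₊ with hbdef
  have hxN0 : (0:ℝ) ≤ x * ((m * n : ℕ) : ℝ) := mul_nonneg hx01.1 (by positivity)
  have hblow : k * n ≤ b := by
    apply Nat.le_floor
    rw [hNcast]
    push_cast
    have := hx.1
    rw [div_le_iff₀ hm'] at this
    nlinarith
  have hbhigh : b < k * n + m := by
    rw [hbdef]
    apply (Nat.floor_lt hxN0).mpr
    rw [hNcast]
    push_cast
    have heq : ((k:ℝ)/m + 1/n) * ((m:ℝ)*n) = (k:ℝ)*n + m := by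
      field_simp
    have := hx.2
    calc x * ((m:ℝ) * n) < ((k:ℝ)/m + 1/n) * ((m:ℝ)*n) := by
          exact mul_lt_mul_of_pos_right this (by positivity)
      _ = (k:ℝ)*n + m := heq
  set r := b - k * n with hrdef
  have hb : b = k * n + r := by omega
  have hr : r < m := by omega
  have hxblk : x ∈ Blk (m * n : ℕ) b := mem_block hN hx01
  obtain ⟨h1, _⟩ := iet_mem_block hN (t := t) (lt_of_lt_of_le hbhigh (by nlinarith [Nat.mul_le_mul_right n hk])) hxblk
  rw [hb, hkey r hr] at h1
  exact blk_mul_subset hm hn hr h1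

end IET
end

/-- **Lemma (vertex deletion).** If `G` is a graph on `n` vertices and `U ⊆ V(G)` has `m`
vertices, then `δ_□(G, G[U]) ≤ 2(1 − m/n)`. -/
theorem cutDist_induce_le {V : Type*} [Fintype V] [DecidableEq V]
    (G : SimpleGraph V) (U : Finset V) :
    cutDist graphMeasure (graphRep G) graphMeasure
        (graphRep (SimpleGraph.induce (↑U : Set V) G))
      ≤ 2 * (1 - (U.card : ℝ) / (Fintype.card V)) := by
  classical
  open IET in
  set H := SimpleGraph.induce (↑U : Set V) G with hH
  set n := Fintype.card V with hn
  set m := Fintype.card ↥(↑U : Set V) with hm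
  have hmcard : m = U.card := by
    rw [hm]
    exact (Fintype.card_congr (Equiv.subtypeEquivRight fun x => Finset.mem_coe)).trans
      (Fintype.card_coe U)
  by_cases hm0 : m = 0
  · -- trivial case: `U` is empty, bound is `2`
    refine le_trans (cutDist_le_cutNorm _ _ _ _ (MeasurableEquiv.refl ℝ)
      (MeasurePreserving.id _)) ?_
    refine le_trans (cutNorm_le_of_good G H (MeasurableEquiv.refl ℝ) ∅
      MeasurableSet.empty (fun x hx => absurd hx (Set.notMem_empty x))) ?_
    rw [Set.compl_empty, measure_univ]
    rw [← hmcard, hm0]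
    norm_num
  · have hmpos : 0 < m := Nat.pos_of_ne_zero hm0
    have hUnonempty : Nonempty ↥(↑U : Set V) := by
      rw [← Fintype.card_pos_iff, ← hm]; exact hmpos
    set eV := Fintype.equivFin V with heV
    set eU := Fintype.equivFin ↥(↑U : Set V) with heU
    set g : Fin m → Fin n := fun k => eV ((eU.symm k : ↥(↑U : Set V)) : V) with hgdef
    have hginj : Function.Injective g := by
      intro a b hab
      have h1 : ((eU.symm a : ↥(↑U : Set V)) : V) = ((eU.symm b : ↥(↑U : Set V)) : V) :=
        eV.injective hab
      have h2 : eU.symm a = eU.symm b := Subtype.coe_injective h1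
      exact eU.symm.injective h2
    have hmn : m ≤ n := by
      have := Fintype.card_le_of_injective g hginj
      simpa using this
    have hnpos : 0 < n := lt_of_lt_of_le hmpos hmn
    have hm' : (0:ℝ) < m := Nat.cast_pos.mpr hmpos
    have hn' : (0:ℝ) < n := Nat.cast_pos.mpr hnpos
    obtain ⟨t, t', htN, ht'N, hinv1, hinv2, hkey⟩ := exists_perm hmpos hmn g hginj
    have hN : 0 < m * n := Nat.mul_pos hmpos hnpos
    set φ : ℝ ≃ᵐ ℝ := ietEquiv (m * n) t t' hN htN ht'N hinv1 hinv2 with hφdef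
    have hφmp : MeasurePreserving φ graphMeasure graphMeasure :=
      iet_measurePreserving hN htN ht'N hinv1 hinv2
    set Good : Set ℝ := ⋃ k : Fin m, Set.Ico ((k:ℝ)/m) ((k:ℝ)/m + 1/n) with hGood
    have hGoodMeas : MeasurableSet Good :=
      MeasurableSet.iUnion fun k => measurableSet_Ico
    have hφx : ∀ (k : Fin m), ∀ x ∈ Set.Ico ((k:ℝ)/m) ((k:ℝ)/m + 1/n),
        φ x ∈ Blk n (g k) := by
      intro k x hx
      exact iet_maps_I hmpos hmn k.isLt (g k).isLt
        (fun r hr => by simpa using hkey k r k.isLt hr) hx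
    have hker : ∀ x ∈ Good, ∀ y ∈ Good, graphRep G (φ x) (φ y) = graphRep H x y := by
      intro x hx y hy
      obtain ⟨k, hxk⟩ := Set.mem_iUnion.mp hx
      obtain ⟨l, hyl⟩ := Set.mem_iUnion.mp hy
      set u : ↥(↑U : Set V) := eU.symm k with hu
      set v : ↥(↑U : Set V) := eU.symm l with hv
      have hxblk : x ∈ Blk m (eU u) := by
        rw [hu, Equiv.apply_symm_apply]
        exact I_subset_blk hmpos hmn k hxk
      have hyblk : y ∈ Blk m (eU v) := by
        rw [hv, Equiv.apply_symm_apply]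
        exact I_subset_blk hmpos hmn l hyl
      have hφxblk : φ x ∈ Blk n (eV (u : V)) := hφx k x hxk
      have hφyblk : φ y ∈ Blk n (eV (v : V)) := hφx l y hyl
      rw [graphRep_eq_ite G (u : V) (v : V) hφxblk hφyblk,
        graphRep_eq_ite H u v hxblk hyblk]
      congr 1
    refine le_trans (cutDist_le_cutNorm _ _ _ _ φ hφmp) ?_
    refine le_trans (cutNorm_le_of_good G H φ Good hGoodMeas hker) ?_
    -- measure computation
    have hIsub : ∀ k : Fin m, Set.Ico ((k:ℝ)/m) ((k:ℝ)/m + 1/n) ⊆ Set.Ico (0:ℝ) 1 := by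
      intro k
      refine Set.Subset.trans (I_subset_blk hmpos hmn k) (block_subset ?_ ?_)
      · exact hmpos
      · exact k.isLt
    have hGoodsub : Good ⊆ Set.Ico (0:ℝ) 1 := Set.iUnion_subset hIsub
    have hπGood : graphMeasure Good = ENNReal.ofReal ((m:ℝ)/n) := by
      rw [graphMeasure, Measure.restrict_apply hGoodMeas,
        Set.inter_eq_left.mpr hGoodsub, hGood]
      rw [measure_iUnion ?_ (fun k => measurableSet_Ico)]
      · have hone : ∀ k : Fin m, volume (Set.Ico ((k:ℝ)/m) ((k:ℝ)/m + 1/n))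
            = ENNReal.ofReal (1/(n:ℝ)) := by
          intro k
          rw [Real.volume_Ico, add_sub_cancel_left]
        rw [tsum_congr hone, tsum_fintype]
        rw [Finset.sum_const, Finset.card_univ, Fintype.card_fin, nsmul_eq_mul]
        rw [← ENNReal.ofReal_natCast m, ← ENNReal.ofReal_mul (Nat.cast_nonneg m)]
        congr 1
        field_simp
      · intro k l hkl
        refine Disjoint.mono (I_subset_blk hmpos hmn k) (I_subset_blk hmpos hmn l)
          (blk_disjoint hm' ?_)
        exact fun h => hkl (Fin.ext h)
    have hle1 : ENNReal.ofReal ((m:ℝ)/n) ≤ 1 := by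
      rw [← ENNReal.ofReal_one]
      exact ENNReal.ofReal_le_ofReal ((div_le_one hn').mpr (Nat.cast_le.mpr hmn))
    have hcompl : (graphMeasure Goodᶜ).toReal = 1 - (m:ℝ)/n := by
      rw [measure_compl hGoodMeas (measure_ne_top _ _), measure_univ, hπGood]
      rw [ENNReal.toReal_sub_of_le hle1 ENNReal.one_ne_top]
      rw [ENNReal.toReal_one, ENNReal.toReal_ofReal (by positivity)]
    rw [hcompl, hmcard]
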